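/- arXiv:2001.04754 — 2 statements merged into one kernel-verified Lean document; each statement's English description precedes it below -/
import Mathlib

section
/- Let ρ be a distribution over functions f : X → ℝ, let P_t and P_{1−t} be two probability distributions on X × ℝ whose marginals on X are P_{x,t} and P_{x,1−t}, and assume both have the same conditional distribution of y given x. Suppose D_∞ = sup_x p_{1−t}(x)/p_t(x) < ∞. Writing L(f,x,y) = (f(x) − y)², μ(x) = E_ρ[f(x)], σ²(x) = Var_ρ[f(x)], the Gibbs risk on P_{1−t} satisfies E_{(x,y)∼P_{1−t}} E_ρ[L(f,x,y)] ≤ (1/2)·E_{x∼P_{x,1−t}}[σ²(x)] + D_∞ · E_{(x,y)∼P_t}[(μ(x) − y)² + (1/2)σ²(x)]. -/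
open MeasureTheory ProbabilityTheory

lemma compProd_mono_left_aux {X : Type*} [MeasurableSpace X]
    {μ ν : Measure X} [SFinite μ] [SFinite ν] (κ : Kernel X ℝ) [IsSFiniteKernel κ]
    (h : μ ≤ ν) : μ ⊗ₘ κ ≤ ν ⊗ₘ κ := by
  rw [Measure.le_iff]
  intro s hs
  rw [Measure.compProd_apply hs, Measure.compProd_apply hs]
  exact lintegral_mono' h le_rfl

/-- Theorem 2 of the paper. `μx` and `νx` are the factual and counterfactual covariate
distributions, `κ` is the (shared) conditional distribution of `y` given `x`, so that the
factual joint is `μx ⊗ₘ κ` and the counterfactual joint is `νx ⊗ₘ κ`. If the density ratio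
of `νx` w.r.t. `μx` is bounded by `D` (i.e. `νx ≤ D • μx`), then the counterfactual Gibbs
risk is bounded by half the expected counterfactual variance plus `D` times the expected
factual loss. -/
theorem stmt3 {X : Type*} [MeasurableSpace X]
    (ρ : Measure (X → ℝ)) [IsProbabilityMeasure ρ]
    (μx νx : Measure X) [IsProbabilityMeasure μx] [IsProbabilityMeasure νx]
    (κ : Kernel X ℝ) [IsMarkovKernel κ]
    (D : ℝ) (hD0 : 0 ≤ D) (hD : νx ≤ (ENNReal.ofReal D) • μx)
    (μf σ2 : X → ℝ)
    (hμf : ∀ x, μf x = ∫ f, f x ∂ρ)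
    (hσ2 : ∀ x, σ2 x = variance (fun f : X → ℝ => f x) ρ)
    (hsq : ∀ x, MemLp (fun f : X → ℝ => f x) 2 ρ)
    (hint1 : Integrable (fun p : X × ℝ => ∫ f, (f p.1 - p.2) ^ 2 ∂ρ) (νx ⊗ₘ κ))
    (hint2 : Integrable σ2 νx)
    (hint3 : Integrable (fun p : X × ℝ => (μf p.1 - p.2) ^ 2 + (1 / 2) * σ2 p.1) (μx ⊗ₘ κ)) :
    ∫ p, ∫ f, (f p.1 - p.2) ^ 2 ∂ρ ∂(νx ⊗ₘ κ)
      ≤ (1 / 2) * ∫ x, σ2 x ∂νx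
        + D * ∫ p, ((μf p.1 - p.2) ^ 2 + (1 / 2) * σ2 p.1) ∂(μx ⊗ₘ κ) := by
  -- pointwise bias–variance decomposition
  have key : ∀ x y : ℝ, ∀ x' : X, ∫ f, (f x' - y) ^ 2 ∂ρ = (μf x' - y) ^ 2 + σ2 x' := by
    intro _ y x
    have hg := hsq x
    have hX : MemLp (fun f : X → ℝ => f x - y) 2 ρ := hg.sub (memLp_const y)
    have hmean : ∫ f, (f x - y) ∂ρ = μf x - y := by
      rw [integral_sub (hg.integrable one_le_two) (integrable_const y), integral_const]
      simp [hμf x]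
    have hvar : variance (fun f : X → ℝ => f x - y) ρ = σ2 x := by
      rw [hσ2 x, variance_eq_integral hX.aemeasurable, variance_eq_integral hg.aemeasurable]
      congr 1
      funext f
      simp only [Pi.pow_apply, Pi.sub_apply, hmean, ← hμf x]
      ring
    have hdef := variance_eq_sub hX
    have h2 : (∫ f, ((fun f : X → ℝ => f x - y) ^ 2) f ∂ρ) = ∫ f, (f x - y) ^ 2 ∂ρ := by
      simp [Pi.pow_apply]
    rw [hvar, hmean, h2] at hdef
    linarith
  have keyfun : (fun p : X × ℝ => ∫ f, (f p.1 - p.2) ^ 2 ∂ρ)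
      = fun p : X × ℝ => (μf p.1 - p.2) ^ 2 + σ2 p.1 := by
    funext p; exact key p.2 p.2 p.1
  -- integrability facts
  have hσfst : Integrable (fun p : X × ℝ => σ2 p.1) (νx ⊗ₘ κ) := by
    have h1 : Integrable σ2 ((νx ⊗ₘ κ).map Prod.fst) := by
      rw [← Measure.fst, Measure.fst_compProd]; exact hint2
    have h2 : AEStronglyMeasurable σ2 ((νx ⊗ₘ κ).map Prod.fst) := h1.aestronglyMeasurable
    exact (integrable_map_measure h2 measurable_fst.aemeasurable).mp h1
  have hσint : ∫ p, σ2 p.1 ∂(νx ⊗ₘ κ) = ∫ x, σ2 x ∂νx := by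
    have h2 : AEStronglyMeasurable σ2 ((νx ⊗ₘ κ).map Prod.fst) := by
      rw [← Measure.fst, Measure.fst_compProd]; exact hint2.aestronglyMeasurable
    have := integral_map (μ := νx ⊗ₘ κ) measurable_fst.aemeasurable h2
    rw [← Measure.fst, Measure.fst_compProd] at this
    exact this.symm
  have hint1' : Integrable (fun p : X × ℝ => (μf p.1 - p.2) ^ 2 + σ2 p.1) (νx ⊗ₘ κ) := by
    rw [← keyfun]; exact hint1
  set g : X × ℝ → ℝ := fun p => (μf p.1 - p.2) ^ 2 + (1 / 2) * σ2 p.1 with hg_def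
  have hgint : Integrable g (νx ⊗ₘ κ) := by
    have : g = fun p : X × ℝ => ((μf p.1 - p.2) ^ 2 + σ2 p.1) - (1 / 2) * σ2 p.1 := by
      funext p; simp [hg_def]; ring
    rw [this]
    exact hint1'.sub (hσfst.const_mul _)
  have hgnonneg : ∀ p : X × ℝ, 0 ≤ g p := by
    intro p
    have : 0 ≤ σ2 p.1 := by rw [hσ2 p.1]; exact variance_nonneg _ _
    positivity
  -- LHS decomposition
  have hLHS : ∫ p, ∫ f, (f p.1 - p.2) ^ 2 ∂ρ ∂(νx ⊗ₘ κ)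
      = (1 / 2) * ∫ x, σ2 x ∂νx + ∫ p, g p ∂(νx ⊗ₘ κ) := by
    rw [keyfun]
    have hsplit : (fun p : X × ℝ => (μf p.1 - p.2) ^ 2 + σ2 p.1)
        = fun p : X × ℝ => (1 / 2) * σ2 p.1 + g p := by
      funext p; simp [hg_def]; ring
    rw [hsplit, integral_add (hσfst.const_mul _) hgint, integral_const_mul, hσint]
  rw [hLHS]
  gcongr
  -- compare measures
  have hle : νx ⊗ₘ κ ≤ (ENNReal.ofReal D) • (μx ⊗ₘ κ) := by
    rw [← Measure.compProd_smul_left]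
    exact compProd_mono_left_aux κ hD
  have hgint' : Integrable g ((ENNReal.ofReal D) • (μx ⊗ₘ κ)) :=
    hint3.smul_measure ENNReal.ofReal_ne_top
  calc ∫ p, g p ∂(νx ⊗ₘ κ)
      ≤ ∫ p, g p ∂((ENNReal.ofReal D) • (μx ⊗ₘ κ)) :=
        integral_mono_measure hle (ae_of_all _ hgnonneg) hgint'
    _ = D * ∫ p, g p ∂(μx ⊗ₘ κ) := by
        rw [integral_smul_measure, ENNReal.toReal_ofReal hD0, smul_eq_mul]
end

section
/- Let y ∈ ℝⁿ, Φ ∈ ℝ^{n×d}, β, λ > 0, and let ρ = N(m, K⁻¹) with K = β ΦᵀΦ + λ I and m = β K⁻¹ Φᵀ y be the posterior, and π = N(0, λ⁻¹ I) the prior. Then the negative log marginal likelihood satisfies −log p(y | Φ) = (n/2) log(2π β⁻¹) + KL(ρ‖π) + (nβ/2)[ (1/n) Σᵢ σ²(xᵢ) + (1/n) Σᵢ (μ(xᵢ) − yᵢ)² ], where μ(xᵢ) = mᵀφ(xᵢ) and σ²(xᵢ) = φ(xᵢ)ᵀ K⁻¹ φ(xᵢ). -/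
open MeasureTheory Matrix Real

lemma gauss_std (d : ℕ) : ∫ v : Fin d → ℝ, rexp (-(1/2) * (v ⬝ᵥ v)) = (2*π) ^ ((d:ℝ)/2) := by
  have e := EuclideanSpace.volume_preserving_symm_measurableEquiv_toLp (Fin d)
  rw [← e.integral_comp (MeasurableEquiv.measurableEmbedding _)]
  have : ∀ v : EuclideanSpace ℝ (Fin d),
      ((MeasurableEquiv.toLp 2 (Fin d → ℝ)).symm v) ⬝ᵥ ((MeasurableEquiv.toLp 2 (Fin d → ℝ)).symm v)
        = ‖v‖ ^ 2 := by
    intro v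
    simp only [MeasurableEquiv.toLp_symm_apply, EuclideanSpace.norm_eq,
      dotProduct]
    rw [sq_sqrt (Finset.sum_nonneg fun i _ => by positivity)]
    simp [sq]
  simp only [Function.comp_def, this]
  have h := GaussianFourier.integral_rexp_neg_mul_sq_norm (V := EuclideanSpace ℝ (Fin d)) (b := 1/2) (by norm_num)
  simp only [neg_mul] at h ⊢
  rw [h]
  rw [finrank_euclideanSpace_fin]
  congr 1
  ring

open scoped MatrixOrder in
lemma gauss_quad {d : ℕ} {K : Matrix (Fin d) (Fin d) ℝ} (hK : K.PosDef) (m : Fin d → ℝ) :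
    ∫ w : Fin d → ℝ, rexp (-(1/2) * ((w - m) ⬝ᵥ (K *ᵥ (w - m))))
      = (2*π) ^ ((d:ℝ)/2) / Real.sqrt K.det := by
  rw [integral_sub_right_eq_self (fun w => rexp (-(1/2) * (w ⬝ᵥ (K *ᵥ w)))) m]
  set S := CFC.sqrt K with hS
  have hSS : S * S = K := CFC.sqrt_mul_sqrt_self K hK.posSemidef.nonneg
  have hSsym : Sᵀ = S := by
    have := (CFC.sqrt_nonneg K).posSemidef.isHermitian
    simpa [Matrix.IsHermitian] using this
  have hdetS : S.det ^ 2 = K.det := by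
    rw [← hSS, Matrix.det_mul, sq]
  have hKdet : 0 < K.det := hK.det_pos
  have hdetSne : S.det ≠ 0 := by
    intro h; rw [← hdetS, h] at hKdet; simp at hKdet
  have key : ∀ w : Fin d → ℝ, w ⬝ᵥ (K *ᵥ w) = (S *ᵥ w) ⬝ᵥ (S *ᵥ w) := by
    intro w
    rw [← hSS, ← Matrix.mulVec_mulVec, dotProduct_mulVec]
    congr 1
    nth_rewrite 1 [← hSsym]
    rw [Matrix.vecMul_transpose]
  simp_rw [key]
  have hmap := Real.map_matrix_volume_pi_eq_smul_volume_pi (M := S) hdetSne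
  have hmeas : Measurable (Matrix.toLin' S) :=
    (Matrix.toLin' S).continuous_of_finiteDimensional.measurable
  have hcont : Continuous fun v : Fin d → ℝ => rexp (-(1/2) * (v ⬝ᵥ v)) := by
    apply Real.continuous_exp.comp
    exact (continuous_const.mul (continuous_finset_sum _ fun i _ =>
      (continuous_apply i).mul (continuous_apply i)))
  calc ∫ w : Fin d → ℝ, rexp (-(1/2) * ((S *ᵥ w) ⬝ᵥ (S *ᵥ w)))
      = ∫ v, rexp (-(1/2) * (v ⬝ᵥ v)) ∂(Measure.map (Matrix.toLin' S) volume) := by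
        rw [integral_map hmeas.aemeasurable hcont.aestronglyMeasurable]
        simp [Matrix.toLin'_apply]
    _ = |S.det|⁻¹ * ∫ v : Fin d → ℝ, rexp (-(1/2) * (v ⬝ᵥ v)) := by
        rw [hmap, integral_smul_measure]
        rw [ENNReal.toReal_ofReal (by positivity)]
        simp [abs_inv, smul_eq_mul]
    _ = (2*π) ^ ((d:ℝ)/2) / Real.sqrt K.det := by
        rw [gauss_std, ← hdetS, Real.sqrt_sq_eq_abs]
        rw [inv_mul_eq_div]

/-- Equation 9 of the paper: the negative log marginal likelihood of Bayesian linear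
regression decomposes as a constant, plus the Gaussian KL divergence between the posterior
`ρ = N(m, K⁻¹)` and the prior `π = N(0, λ⁻¹ I)` (written in closed form), plus `nβ/2` times
the sum of the average posterior variance and the average squared error of the posterior
mean on the training points.  The marginal likelihood `p(y | Φ)` is the integral over `w`
of the Gaussian likelihood times the Gaussian prior density. -/
theorem stmt12 (n d : ℕ) (hn : 0 < n) (Φ : Matrix (Fin n) (Fin d) ℝ) (y : Fin n → ℝ)
    (β lam : ℝ) (hβ : 0 < β) (hlam : 0 < lam)
    (K : Matrix (Fin d) (Fin d) ℝ)
    (hK : K = β • (Φᵀ * Φ) + lam • (1 : Matrix (Fin d) (Fin d) ℝ))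
    (m : Fin d → ℝ) (hm : m = β • (K⁻¹ *ᵥ (Φᵀ *ᵥ y)))
    (μp σ2 : Fin n → ℝ)
    (hμp : ∀ i, μp i = m ⬝ᵥ (fun j => Φ i j))
    (hσ2 : ∀ i, σ2 i = (fun j => Φ i j) ⬝ᵥ (K⁻¹ *ᵥ (fun j => Φ i j)))
    (KLρπ : ℝ)
    (hKL : KLρπ = (1 / 2) * (lam * (K⁻¹).trace + lam * (m ⬝ᵥ m) - d
        + Real.log (K.det / lam ^ d))) :
    -Real.log (∫ w : Fin d → ℝ,
        ((β / (2 * π)) ^ ((n : ℝ) / 2)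
            * exp (-(β / 2) * ((Φ *ᵥ w - y) ⬝ᵥ (Φ *ᵥ w - y))))
        * ((lam / (2 * π)) ^ ((d : ℝ) / 2) * exp (-(lam / 2) * (w ⬝ᵥ w))))
      = ((n : ℝ) / 2) * Real.log (2 * π * β⁻¹) + KLρπ
        + ((n : ℝ) * β / 2)
          * ((1 / (n : ℝ)) * ∑ i, σ2 i + (1 / (n : ℝ)) * ∑ i, (μp i - y i) ^ 2) := by
  have h2π : (0:ℝ) < 2 * π := by positivity
  -- quadratic form expansion
  have hquad : ∀ v : Fin d → ℝ,
      v ⬝ᵥ (K *ᵥ v) = β * ((Φ *ᵥ v) ⬝ᵥ (Φ *ᵥ v)) + lam * (v ⬝ᵥ v) := by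
    intro v
    rw [hK, Matrix.add_mulVec, Matrix.smul_mulVec, Matrix.smul_mulVec,
      Matrix.one_mulVec, ← Matrix.mulVec_mulVec, dotProduct_add,
      dotProduct_smul, dotProduct_smul, dotProduct_mulVec v Φᵀ,
      Matrix.vecMul_transpose, smul_eq_mul, smul_eq_mul]
  -- positive definiteness
  have hKpd : K.PosDef := by
    refine Matrix.PosDef.of_dotProduct_mulVec_pos ?_ ?_
    · rw [Matrix.IsHermitian, conjTranspose_eq_transpose_of_trivial, hK]
      simp [Matrix.transpose_add, Matrix.transpose_smul, Matrix.transpose_mul,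
        Matrix.transpose_transpose]
    · intro x hx
      have hxx : 0 < x ⬝ᵥ x := by
        rcases (dotProduct_self_eq_zero (v := x)).not.mpr hx with h
        have : 0 ≤ x ⬝ᵥ x := Finset.sum_nonneg fun i _ => mul_self_nonneg _
        exact lt_of_le_of_ne this (Ne.symm h)
      have h1 : 0 ≤ (Φ *ᵥ x) ⬝ᵥ (Φ *ᵥ x) := Finset.sum_nonneg fun i _ => mul_self_nonneg _
      have := hquad x
      simp only [star_trivial]
      rw [this]
      have : 0 < lam * (x ⬝ᵥ x) := mul_pos hlam hxx
      nlinarith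
  have hdetK : 0 < K.det := hKpd.det_pos
  have hKunit : IsUnit K.det := isUnit_iff_ne_zero.mpr (ne_of_gt hdetK)
  have hKm : K *ᵥ m = β • (Φᵀ *ᵥ y) := by
    rw [hm, Matrix.mulVec_smul, Matrix.mulVec_mulVec, Matrix.mul_nonsing_inv K hKunit,
      Matrix.one_mulVec]
  have hdotKm : ∀ v : Fin d → ℝ, v ⬝ᵥ (K *ᵥ m) = β * ((Φ *ᵥ v) ⬝ᵥ y) := by
    intro v
    rw [hKm, dotProduct_smul, smul_eq_mul, dotProduct_mulVec v Φᵀ,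
      Matrix.vecMul_transpose]
  have hKsym : ∀ u v : Fin d → ℝ, u ⬝ᵥ (K *ᵥ v) = v ⬝ᵥ (K *ᵥ u) := by
    intro u v
    rw [dotProduct_mulVec, ← Matrix.mulVec_transpose]
    have ht : Kᵀ = K := by
      have := hKpd.isHermitian
      rwa [Matrix.IsHermitian, conjTranspose_eq_transpose_of_trivial] at this
    rw [ht, dotProduct_comm]
  -- constant in front of the Gaussian
  set c0 : ℝ := y ⬝ᵥ y with hc0
  set M0 : ℝ := m ⬝ᵥ (K *ᵥ m) with hM0
  set C : ℝ := (β / (2 * π)) ^ ((n : ℝ) / 2) * (lam / (2 * π)) ^ ((d : ℝ) / 2)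
      * rexp (-(1/2) * (β * c0 - M0)) with hC
  -- pointwise identity
  have hpt : (fun w : Fin d → ℝ =>
      ((β / (2 * π)) ^ ((n : ℝ) / 2)
          * exp (-(β / 2) * ((Φ *ᵥ w - y) ⬝ᵥ (Φ *ᵥ w - y))))
      * ((lam / (2 * π)) ^ ((d : ℝ) / 2) * exp (-(lam / 2) * (w ⬝ᵥ w))))
      = fun w => C * rexp (-(1/2) * ((w - m) ⬝ᵥ (K *ᵥ (w - m)))) := by
    funext w
    have e1 : (Φ *ᵥ w - y) ⬝ᵥ (Φ *ᵥ w - y)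
        = (Φ *ᵥ w) ⬝ᵥ (Φ *ᵥ w) - 2 * ((Φ *ᵥ w) ⬝ᵥ y) + c0 := by
      rw [sub_dotProduct, dotProduct_sub, dotProduct_sub,
        dotProduct_comm y (Φ *ᵥ w), hc0]
      ring
    have e2 : (w - m) ⬝ᵥ (K *ᵥ (w - m))
        = w ⬝ᵥ (K *ᵥ w) - 2 * (w ⬝ᵥ (K *ᵥ m)) + M0 := by
      rw [Matrix.mulVec_sub, sub_dotProduct, dotProduct_sub,
        dotProduct_sub, hKsym m w, hM0]
      ring
    have hexp : (-(β / 2) * ((Φ *ᵥ w - y) ⬝ᵥ (Φ *ᵥ w - y)) + -(lam / 2) * (w ⬝ᵥ w))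
        = -(1/2) * ((w - m) ⬝ᵥ (K *ᵥ (w - m))) + -(1/2) * (β * c0 - M0) := by
      rw [e1, e2, hquad w, hdotKm w]; ring
    rw [hC, mul_mul_mul_comm, ← Real.exp_add, hexp, Real.exp_add]
    ring
  rw [hpt, MeasureTheory.integral_const_mul, gauss_quad hKpd m]
  -- now pure scalar computation
  have hCpos : 0 < C := by
    rw [hC]; positivity
  have hGpos : 0 < (2*π) ^ ((d:ℝ)/2) / Real.sqrt K.det := by positivity
  rw [Real.log_mul (ne_of_gt hCpos) (ne_of_gt hGpos), hC]
  rw [Real.log_mul (by positivity) (ne_of_gt (Real.exp_pos _)),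
    Real.log_mul (by positivity) (by positivity), Real.log_exp,
    Real.log_div (by positivity) (ne_of_gt (Real.sqrt_pos.mpr hdetK)),
    Real.log_rpow (by positivity), Real.log_rpow (by positivity),
    Real.log_rpow h2π, Real.log_sqrt (le_of_lt hdetK),
    Real.log_div (ne_of_gt hβ) (ne_of_gt h2π), Real.log_div (ne_of_gt hlam) (ne_of_gt h2π)]
  -- facts about sums
  have hsum_σ : ∑ i, σ2 i = Matrix.trace (K⁻¹ * (Φᵀ * Φ)) := by
    simp only [hσ2, Matrix.trace, Matrix.diag, Matrix.mul_apply, Matrix.mulVec,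
      dotProduct, Matrix.transpose_apply, Finset.mul_sum]
    rw [Finset.sum_comm]
    refine Finset.sum_congr rfl fun j _ => ?_
    rw [Finset.sum_comm]
    exact Finset.sum_congr rfl fun k _ => Finset.sum_congr rfl fun i _ => by ring
  have htr : β * Matrix.trace (K⁻¹ * (Φᵀ * Φ)) = d - lam * Matrix.trace K⁻¹ := by
    have h1 : β • (Φᵀ * Φ) = K - lam • (1 : Matrix (Fin d) (Fin d) ℝ) := by
      rw [hK, add_sub_cancel_right]
    have h2 : K⁻¹ * (β • (Φᵀ * Φ)) = 1 - lam • K⁻¹ := by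
      rw [h1, Matrix.mul_sub, Matrix.nonsing_inv_mul K hKunit, Matrix.mul_smul, Matrix.mul_one]
    calc β * Matrix.trace (K⁻¹ * (Φᵀ * Φ))
        = Matrix.trace (K⁻¹ * (β • (Φᵀ * Φ))) := by
          rw [Matrix.mul_smul, Matrix.trace_smul, smul_eq_mul]
      _ = d - lam * Matrix.trace K⁻¹ := by
          rw [h2, Matrix.trace_sub, Matrix.trace_smul, Matrix.trace_one, smul_eq_mul]
          simp
  have hsum_err : ∑ i, (μp i - y i) ^ 2 = (Φ *ᵥ m - y) ⬝ᵥ (Φ *ᵥ m - y) := by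
    simp only [dotProduct, Pi.sub_apply]
    refine Finset.sum_congr rfl fun i _ => ?_
    rw [hμp i]
    have : (Φ *ᵥ m) i = m ⬝ᵥ (fun j => Φ i j) := by
      simp [Matrix.mulVec, dotProduct, mul_comm]
    rw [this]; ring
  have herr : (Φ *ᵥ m - y) ⬝ᵥ (Φ *ᵥ m - y)
      = (Φ *ᵥ m) ⬝ᵥ (Φ *ᵥ m) - 2 * ((Φ *ᵥ m) ⬝ᵥ y) + c0 := by
    rw [sub_dotProduct, dotProduct_sub, dotProduct_sub,
      dotProduct_comm y (Φ *ᵥ m), hc0]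
    ring
  have hM1 : M0 = β * ((Φ *ᵥ m) ⬝ᵥ y) := by rw [hM0, hdotKm m]
  have hM2 : M0 = β * ((Φ *ᵥ m) ⬝ᵥ (Φ *ᵥ m)) + lam * (m ⬝ᵥ m) := by rw [hM0, hquad m]
  rw [hKL, hsum_err, herr, hsum_σ,
    Real.log_mul (ne_of_gt h2π) (inv_ne_zero (ne_of_gt hβ)),
    Real.log_div (ne_of_gt hdetK) (by positivity), Real.log_pow, Real.log_inv]
  have hnne : (n:ℝ) ≠ 0 := Nat.cast_ne_zero.mpr hn.ne'
  have hcancel : ∀ A B : ℝ, ((n:ℝ) * β / 2) * ((1/(n:ℝ)) * A + (1/(n:ℝ)) * B)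
      = (β/2) * (A + B) := by
    intro A B
    field_simp
  rw [hcancel]
  linear_combination (-1/2 : ℝ) * htr + (1/2 : ℝ) * hM2 - hM1
end
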